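/- Let a, b ∈ ℂ and let λ₊, λ₋ be the two roots (counted with multiplicity) of λ² + aλ + b = 0, labeled so that Re λ₋ ≤ Re λ₊, and assume Re λ₊ < 0. Let y : [0,∞) → ℂ be twice differentiable with y''(t) + a y'(t) + b y(t) = 0 for all t ≥ 0, y(0) = 0, y'(0) = y₁. Then for every t ≥ 0: |y(t)| ≤ e^{(Re λ₊) t} · t · |y₁| and |y'(t)| ≤ e^{(Re λ₊) t} (1 + t |λ₋|) |y₁|. -/

import Mathlib

lemma expDeriv (c : ℂ) (s : ℝ) :
    HasDerivAt (fun s : ℝ => Complex.exp (c * s)) (c * Complex.exp (c * s)) s := by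
  have h1 : HasDerivAt (fun z : ℂ => Complex.exp (c * z)) (Complex.exp (c * s) * c) (s : ℂ) :=
    (Complex.hasDerivAt_exp (c * (s : ℂ))).comp (s : ℂ)
      (by simpa using (hasDerivAt_id ((s : ℝ) : ℂ)).const_mul c)
  simpa [mul_comm] using h1.comp_ofReal

/-- Lemma 3.1: if the roots `λ₊, λ₋` of `λ² + aλ + b = 0` (counted with multiplicity,
so `λ₊ + λ₋ = -a`) satisfy `Re λ₋ ≤ Re λ₊ < 0`, then any solution of
`y'' + a y' + b y = 0`, `y(0) = 0`, `y'(0) = y₁` satisfies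
`|y(t)| ≤ e^{(Re λ₊) t} t |y₁|` and `|y'(t)| ≤ e^{(Re λ₊) t}(1 + t|λ₋|)|y₁|` for `t ≥ 0`. -/
theorem stmt_6 (a b y₁ lp lm : ℂ)
    (hrootp : lp ^ 2 + a * lp + b = 0) (hrootm : lm ^ 2 + a * lm + b = 0)
    (hsum : lp + lm = -a)
    (hre : lm.re ≤ lp.re) (hneg : lp.re < 0)
    (y y' y'' : ℝ → ℂ)
    (hy1 : ∀ t ≥ (0 : ℝ), HasDerivAt y (y' t) t)
    (hy2 : ∀ t ≥ (0 : ℝ), HasDerivAt y' (y'' t) t)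
    (hode : ∀ t ≥ (0 : ℝ), y'' t + a * y' t + b * y t = 0)
    (hy0 : y 0 = 0) (hy0' : y' 0 = y₁) :
    ∀ t ≥ (0 : ℝ),
      ‖y t‖ ≤ Real.exp (lp.re * t) * t * ‖y₁‖ ∧
      ‖y' t‖ ≤ Real.exp (lp.re * t) * (1 + t * ‖lm‖) * ‖y₁‖ := by
  have hb : b = lp * lm := by linear_combination hrootp - lp * hsum
  have ha : a = -(lp + lm) := by linear_combination hsum
  -- u(t) := y' t - lm * y t satisfies u(t) = exp(lp t) y₁ for t ≥ 0
  have key : ∀ t ≥ (0 : ℝ), y' t - lm * y t = Complex.exp (lp * t) * y₁ := by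
    intro t ht
    set g : ℝ → ℂ := fun s => Complex.exp (-lp * s) * (y' s - lm * y s) with hg
    have hderiv : ∀ s ∈ Set.Icc (0 : ℝ) t, HasDerivWithinAt g 0 (Set.Icc 0 t) s := by
      intro s hs
      have hs0 : (0 : ℝ) ≤ s := hs.1
      have h1 := hy1 s hs0
      have h2 := hy2 s hs0
      have hD : HasDerivAt g
          ((-lp * Complex.exp (-lp * s)) * (y' s - lm * y s)
            + Complex.exp (-lp * s) * (y'' s - lm * y' s)) s :=
        (expDeriv (-lp) s).mul (h2.sub (h1.const_mul lm))
      have hzero : (-lp * Complex.exp (-lp * s)) * (y' s - lm * y s)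
            + Complex.exp (-lp * s) * (y'' s - lm * y' s) = 0 := by
        have h := hode s hs0
        rw [ha, hb] at h
        linear_combination Complex.exp (-(lp : ℂ) * s) * h
      rw [hzero] at hD
      exact hD.hasDerivWithinAt
    have hmvt := (convex_Icc (0:ℝ) t).norm_image_sub_le_of_norm_hasDerivWithin_le
      (f' := fun _ : ℝ => (0 : ℂ)) (C := 0) hderiv (fun s _ => by simp)
      (Set.left_mem_Icc.2 ht) (Set.right_mem_Icc.2 ht)
    have hgt : g t = g 0 := by
      have h0 : ‖g t - g 0‖ ≤ 0 := by simpa using hmvt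
      exact sub_eq_zero.1 (norm_le_zero_iff.1 h0)
    have hg0 : g 0 = y₁ := by simp [hg, hy0, hy0']
    have : Complex.exp (-lp * t) * (y' t - lm * y t) = y₁ := by
      rw [← hg0]; exact hgt
    have hne : Complex.exp (-lp * t) ≠ 0 := Complex.exp_ne_zero _
    field_simp at this
    rw [← this, ← mul_assoc, ← Complex.exp_add]
    simp
  intro t ht
  -- bound on y
  have hyb : ‖y t‖ ≤ Real.exp (lp.re * t) * t * ‖y₁‖ := by
    set h : ℝ → ℂ := fun s => Complex.exp (-lm * s) * y s with hh
    set C : ℝ := Real.exp ((lp.re - lm.re) * t) * ‖y₁‖ with hC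
    have hderiv : ∀ s ∈ Set.Icc (0 : ℝ) t,
        HasDerivWithinAt h (Complex.exp ((lp - lm) * s) * y₁) (Set.Icc 0 t) s := by
      intro s hs
      have hs0 : (0 : ℝ) ≤ s := hs.1
      have h1 := hy1 s hs0
      have hD : HasDerivAt h
          ((-lm * Complex.exp (-lm * s)) * y s + Complex.exp (-lm * s) * y' s) s :=
        (expDeriv (-lm) s).mul h1
      have heq : (-lm * Complex.exp (-lm * s)) * y s + Complex.exp (-lm * s) * y' s
          = Complex.exp ((lp - lm) * s) * y₁ := by
        have hk := key s hs0
        have : Complex.exp ((lp - lm) * s) = Complex.exp (-lm * s) * Complex.exp (lp * s) := by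
          rw [← Complex.exp_add]; ring_nf
        rw [this]
        linear_combination Complex.exp (-lm * (s : ℂ)) * hk
      rw [heq] at hD
      exact hD.hasDerivWithinAt
    have hbound : ∀ s ∈ Set.Icc (0 : ℝ) t, ‖Complex.exp ((lp - lm) * s) * y₁‖ ≤ C := by
      intro s hs
      rw [norm_mul, Complex.norm_exp]
      have hre' : ((lp - lm) * (s : ℂ)).re = (lp.re - lm.re) * s := by
        simp [Complex.mul_re, Complex.sub_re, Complex.sub_im]
      rw [hre', hC]
      have hmono : (lp.re - lm.re) * s ≤ (lp.re - lm.re) * t :=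
        mul_le_mul_of_nonneg_left hs.2 (sub_nonneg.2 hre)
      exact mul_le_mul_of_nonneg_right (Real.exp_le_exp.2 hmono) (norm_nonneg _)
    have hmvt := (convex_Icc (0:ℝ) t).norm_image_sub_le_of_norm_hasDerivWithin_le
      (f' := fun s : ℝ => Complex.exp ((lp - lm) * s) * y₁) hderiv hbound
      (Set.left_mem_Icc.2 ht) (Set.right_mem_Icc.2 ht)
    have hh0 : h 0 = 0 := by simp [hh, hy0]
    have hht : ‖h t‖ ≤ C * t := by
      simpa [hh0, abs_of_nonneg ht] using hmvt
    have hyt : y t = Complex.exp (lm * t) * h t := by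
      show y t = Complex.exp (lm * ↑t) * (Complex.exp (-lm * ↑t) * y t)
      rw [← mul_assoc, ← Complex.exp_add]
      simp [neg_mul]
    calc ‖y t‖ = Real.exp (lm.re * t) * ‖h t‖ := by
          rw [hyt, norm_mul, Complex.norm_exp]
          congr 2
          simp [Complex.mul_re]
      _ ≤ Real.exp (lm.re * t) * (C * t) :=
          mul_le_mul_of_nonneg_left hht (Real.exp_nonneg _)
      _ = Real.exp (lp.re * t) * t * ‖y₁‖ := by
          rw [hC]
          rw [show Real.exp (lm.re * t) * (Real.exp ((lp.re - lm.re) * t) * ‖y₁‖ * t)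
            = (Real.exp (lm.re * t) * Real.exp ((lp.re - lm.re) * t)) * t * ‖y₁‖ by ring]
          rw [← Real.exp_add]
          ring_nf
    done
  refine ⟨hyb, ?_⟩
  have hk := key t ht
  have hyt' : y' t = lm * y t + Complex.exp (lp * t) * y₁ := by
    linear_combination hk
  calc ‖y' t‖
      ≤ ‖lm * y t‖ + ‖Complex.exp (lp * t) * y₁‖ := by
        rw [hyt']; exact norm_add_le _ _
    _ ≤ ‖lm‖ * (Real.exp (lp.re * t) * t * ‖y₁‖)
        + Real.exp (lp.re * t) * ‖y₁‖ := by
        rw [norm_mul, norm_mul, Complex.norm_exp]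
        gcongr
        · exact le_of_eq (by congr 1; simp [Complex.mul_re])
    _ = Real.exp (lp.re * t) * (1 + t * ‖lm‖) * ‖y₁‖ := by ring
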